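/- Let n ≥ 1 and let α = (α_1, …, α_n) ∈ ℝ^n. Suppose there exist δ > 0 and infinitely many positive integers q such that for every η = (η_1, …, η_n) ∈ ℝ^n there exists a positive integer k ≤ q with max_{1≤j≤n} ‖kα_j − η_j‖ ≤ δ/q^{1/n}. Then α is non-singular, i.e. limsup_{t→∞} t^{1/n} · ψ_α(t) > 0, where ψ_α(t) = min_{q∈ℤ, 1≤q≤t} max_{1≤j≤n} ‖qα_j‖. -/

import Mathlib

open MeasureTheory Filter

/-- Distance from `x` to the nearest integer: `‖x‖ = min_{a ∈ ℤ} |x - a|`. -/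
noncomputable def nint (x : ℝ) : ℝ := ⨅ a : ℤ, |x - (a : ℝ)|



lemma nint_bdd (x : ℝ) : BddBelow (Set.range fun a : ℤ => |x - (a : ℝ)|) :=
  ⟨0, by rintro y ⟨a, rfl⟩; positivity⟩

lemma nint_le (x : ℝ) (a : ℤ) : nint x ≤ |x - a| := ciInf_le (nint_bdd x) a

lemma nint_nonneg (x : ℝ) : 0 ≤ nint x :=
  le_ciInf fun a => by positivity

lemma nint_eq (x : ℝ) : nint x = |x - round x| := by
  refine le_antisymm (nint_le x _) (le_ciInf fun a => ?_)
  by_contra hlt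
  push_neg at hlt
  have h1 : |x - round x| ≤ 1 / 2 := abs_sub_round x
  have h2 : |(round x : ℝ) - a| < 1 := by
    calc |(round x : ℝ) - a| ≤ |(round x:ℝ) - x| + |x - a| := abs_sub_le _ _ _
      _ < 1 := by rw [abs_sub_comm] ; linarith
  have h3 : |round x - a| < 1 := by
    have hc : ((round x - a : ℤ) : ℝ) = (round x : ℝ) - a := by push_cast; ring
    have := abs_lt.mp (hc ▸ h2)
    rw [abs_lt]
    constructor <;> [exact_mod_cast this.1; exact_mod_cast this.2]
  have : round x = a := by
    have := abs_lt.mp h3; omega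
  subst this
  exact absurd hlt (not_lt.mpr le_rfl)

lemma nint_le_half (x : ℝ) : nint x ≤ 1 / 2 := (nint_eq x) ▸ abs_sub_round x

lemma nint_neg (x : ℝ) : nint (-x) = nint x := by
  apply le_antisymm
  · rw [nint_eq x]
    have := nint_le (-x) (-round x)
    refine this.trans_eq ?_
    push_cast
    rw [show -x - -(round x:ℝ) = -(x - round x) by ring, abs_neg]
  · rw [nint_eq (-x)]
    have := nint_le x (-round (-x))
    refine this.trans_eq ?_
    push_cast
    rw [abs_sub_comm]
    ring_nf

lemma nint_add_le (x y : ℝ) : nint (x + y) ≤ nint x + nint y := by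
  rw [nint_eq x, nint_eq y]
  calc nint (x + y) ≤ |x + y - ((round x + round y : ℤ) : ℝ)| := nint_le _ _
    _ ≤ |x - round x| + |y - round y| := by push_cast; rw [show x + y - ((round x:ℝ) + round y) = (x - round x) + (y - round y) by ring]; exact abs_add_le _ _

lemma nint_int_mul_le (s : ℕ) (x : ℝ) : nint ((s:ℝ) * x) ≤ (s:ℝ) * nint x := by
  rw [nint_eq x]
  calc nint ((s:ℝ) * x) ≤ |(s:ℝ)*x - ((s * round x : ℤ) : ℝ)| := nint_le _ _
    _ = (s:ℝ) * |x - round x| := by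
        push_cast
        rw [show (s:ℝ)*x - (s:ℝ)*(round x:ℝ) = (s:ℝ)*(x - round x) by ring, abs_mul,
          abs_of_nonneg (show (0:ℝ) ≤ (s:ℝ) by positivity)]

lemma nint_sub_int (x : ℝ) (a : ℤ) : nint (x - a) = nint x := by
  apply le_antisymm
  · have := nint_le (x - a) (round x - a)
    rw [nint_eq x]
    refine this.trans_eq ?_; push_cast; ring_nf
  · have := nint_le x (round (x - (a:ℝ)) + a)
    rw [nint_eq (x - a)]
    refine this.trans_eq ?_; push_cast; ring_nf

/-- The irrationality measure function
`ψ_α(t) = min_{q ∈ ℤ, 1 ≤ q ≤ t} max_{1 ≤ j ≤ n} ‖q α_j‖`. -/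
noncomputable def psiFun (n : ℕ) (α : Fin n → ℝ) (t : ℝ) : ℝ :=
  sInf {v : ℝ | ∃ q : ℕ, 1 ≤ q ∧ (q : ℝ) ≤ t ∧ v = ⨆ j, nint ((q : ℝ) * α j)}


section
variable {n : ℕ} (α : Fin n → ℝ)

lemma nint_bdd' (f : Fin n → ℝ) : BddAbove (Set.range fun j => nint (f j)) :=
  ⟨1/2, by rintro y ⟨j, rfl⟩; exact nint_le_half _⟩

lemma nint_le_sup (f : Fin n → ℝ) (j : Fin n) : nint (f j) ≤ ⨆ i, nint (f i) :=
  le_ciSup (nint_bdd' f) j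

lemma sup_nint_le (hn : 1 ≤ n) (f : Fin n → ℝ) {c : ℝ} (h : ∀ j, nint (f j) ≤ c) :
    (⨆ j, nint (f j)) ≤ c := by
  have : Nonempty (Fin n) := ⟨⟨0, hn⟩⟩
  exact ciSup_le h

lemma sup_nint_nonneg (hn : 1 ≤ n) (f : Fin n → ℝ) : 0 ≤ ⨆ j, nint (f j) :=
  (nint_nonneg _).trans (nint_le_sup f ⟨0, hn⟩)

lemma psi_bddBelow (hn : 1 ≤ n) (t : ℝ) :
    BddBelow {v : ℝ | ∃ q : ℕ, 1 ≤ q ∧ (q : ℝ) ≤ t ∧ v = ⨆ j, nint ((q : ℝ) * α j)} := by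
  refine ⟨0, ?_⟩
  rintro v ⟨q, -, -, rfl⟩
  exact sup_nint_nonneg hn _

lemma psi_nonneg (hn : 1 ≤ n) (t : ℝ) : 0 ≤ psiFun n α t := by
  apply Real.sInf_nonneg
  rintro v ⟨q, -, -, rfl⟩
  exact sup_nint_nonneg hn _

lemma psi_le (hn : 1 ≤ n) (q : ℕ) (hq : 1 ≤ q) {t : ℝ} (ht : (q:ℝ) ≤ t) :
    psiFun n α t ≤ ⨆ j, nint ((q : ℝ) * α j) :=
  csInf_le (psi_bddBelow α hn t) ⟨q, hq, ht, rfl⟩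

lemma psi_nonempty {t : ℝ} (ht : 1 ≤ t) :
    {v : ℝ | ∃ q : ℕ, 1 ≤ q ∧ (q : ℝ) ≤ t ∧ v = ⨆ j, nint ((q : ℝ) * α j)}.Nonempty :=
  ⟨_, 1, le_refl 1, by exact_mod_cast ht, rfl⟩

lemma psi_lt {t v : ℝ} (ht : 1 ≤ t) (hv : psiFun n α t < v) :
    ∃ q : ℕ, 1 ≤ q ∧ (q:ℝ) ≤ t ∧ (⨆ j, nint ((q : ℝ) * α j)) < v := by
  obtain ⟨w, ⟨q, hq1, hq2, rfl⟩, hw⟩ := exists_lt_of_csInf_lt (psi_nonempty α ht) hv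
  exact ⟨q, hq1, hq2, hw⟩

end

lemma nint_sub_le_fract (X1 X2 : ℝ) :
    nint (X2 - X1) ≤ |Int.fract X2 - Int.fract X1| := by
  have h := nint_le (X2 - X1) (⌊X2⌋ - ⌊X1⌋)
  refine h.trans_eq ?_
  congr 1
  unfold Int.fract
  push_cast
  ring

lemma psi_bounded (n : ℕ) (hn : 1 ≤ n) (α : Fin n → ℝ) :
    ∀ᶠ t in (atTop : Filter ℝ), t ^ ((1:ℝ)/n) * psiFun n α t ≤ 4 := by
  have hn0 : (n:ℝ) ≠ 0 := by positivity
  filter_upwards [eventually_ge_atTop (max 2 ((4:ℝ)^n))] with t ht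
  have ht2 : (2:ℝ) ≤ t := le_trans (le_max_left _ _) ht
  have ht4 : (4:ℝ)^n ≤ t := le_trans (le_max_right _ _) ht
  have ht0 : (0:ℝ) < t := by linarith
  set N : ℕ := ⌊t⌋₊ with hNdef
  have hN1 : 1 ≤ N := Nat.le_floor (by exact_mod_cast (by linarith : (1:ℝ) ≤ t))
  have hNt : (N:ℝ) ≤ t := Nat.floor_le ht0.le
  have hNgt : t - 1 < (N:ℝ) := Nat.sub_one_lt_floor t
  set M : ℕ := ⌊(N:ℝ) ^ ((1:ℝ)/n)⌋₊ with hMdef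
  have hrpow_pos : (1:ℝ) ≤ (N:ℝ) ^ ((1:ℝ)/n) :=
    Real.one_le_rpow (by exact_mod_cast hN1) (by positivity)
  have hM1 : 1 ≤ M := Nat.le_floor (by exact_mod_cast hrpow_pos)
  have hM0 : (0:ℝ) < M := by exact_mod_cast hM1
  have hMle : (M:ℝ) ≤ (N:ℝ) ^ ((1:ℝ)/n) := Nat.floor_le (by positivity)
  have hMn : M ^ n ≤ N := by
    have h1 : ((M:ℝ))^n ≤ ((N:ℝ) ^ ((1:ℝ)/n))^n :=
      pow_le_pow_left₀ (by positivity) hMle n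
    have h2 : ((N:ℝ) ^ ((1:ℝ)/n))^n = (N:ℝ) := by
      rw [← Real.rpow_natCast ((N:ℝ) ^ ((1:ℝ)/n)) n, ← Real.rpow_mul (by positivity),
        one_div, inv_mul_cancel₀ hn0, Real.rpow_one]
    have : ((M ^ n : ℕ) : ℝ) ≤ (N:ℝ) := by push_cast; exact h1.trans_eq h2
    exact_mod_cast this
  -- pigeonhole
  have hcard : Fintype.card (Fin n → Fin M) < Fintype.card (Fin (N+1)) := by
    rw [Fintype.card_fun, Fintype.card_fin, Fintype.card_fin, Fintype.card_fin]
    omega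
  set F : Fin (N+1) → (Fin n → Fin M) := fun k j =>
    ⟨⌊(M:ℝ) * Int.fract ((k:ℝ) * α j)⌋₊, by
      apply (Nat.floor_lt (mul_nonneg hM0.le (Int.fract_nonneg _))).mpr
      nlinarith [Int.fract_lt_one ((k:ℝ) * α j), Int.fract_nonneg ((k:ℝ) * α j)]⟩
  obtain ⟨a, b, hab, hFab⟩ := Fintype.exists_ne_map_eq_of_card_lt F hcard
  -- wlog a < b
  obtain ⟨k1, k2, hk12, hF⟩ : ∃ k1 k2 : Fin (N+1), k1 < k2 ∧ F k1 = F k2 := by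
    rcases lt_or_gt_of_ne hab with hlt | hgt
    · exact ⟨a, b, hlt, hFab⟩
    · exact ⟨b, a, hgt, hFab.symm⟩
  set d : ℕ := k2.val - k1.val with hddef
  have hd1 : 1 ≤ d := by omega
  have hdN : (d:ℝ) ≤ N := by
    have : d ≤ N := by omega
    exact_mod_cast this
  have key : ∀ j : Fin n, nint ((d:ℝ) * α j) < 1 / M := by
    intro j
    have hdr : (d:ℝ) * α j = (k2:ℝ) * α j - (k1:ℝ) * α j := by
      have : (d:ℝ) = (k2:ℝ) - (k1:ℝ) := by
        have : (k1:ℕ) ≤ (k2:ℕ) := le_of_lt hk12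
        push_cast [hddef, this]; ring
      rw [this]; ring
    have hfl : ⌊(M:ℝ) * Int.fract ((k2:ℝ) * α j)⌋₊ = ⌊(M:ℝ) * Int.fract ((k1:ℝ) * α j)⌋₊ := by
      have := congrFun hF j
      simpa [F, Fin.ext_iff] using this.symm
    set u := Int.fract ((k2:ℝ) * α j)
    set v := Int.fract ((k1:ℝ) * α j)
    set d0 : ℕ := ⌊(M:ℝ) * v⌋₊
    have hu1 : (M:ℝ) * u < d0 + 1 := by
      rw [← hfl]; exact Nat.lt_floor_add_one _
    have hu0 : (d0:ℝ) ≤ (M:ℝ) * u := by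
      rw [← hfl]
      exact Nat.floor_le (mul_nonneg hM0.le (Int.fract_nonneg _))
    have hv1 : (M:ℝ) * v < d0 + 1 := Nat.lt_floor_add_one _
    have hv0 : (d0:ℝ) ≤ (M:ℝ) * v :=
      Nat.floor_le (mul_nonneg hM0.le (Int.fract_nonneg _))
    have habs : |u - v| < 1 / M := by
      rw [abs_sub_lt_iff]
      constructor <;> rw [lt_div_iff₀ hM0] <;> nlinarith
    calc nint ((d:ℝ) * α j) ≤ |u - v| := by rw [hdr]; exact nint_sub_le_fract _ _
      _ < 1 / M := habs
  have hpsi : psiFun n α t ≤ 1 / M := by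
    refine (psi_le α hn d hd1 (hdN.trans hNt)).trans ?_
    exact sup_nint_le hn _ fun j => (key j).le
  -- final bound
  have htp0 : (0:ℝ) ≤ t ^ ((1:ℝ)/n) := Real.rpow_nonneg ht0.le _
  have hchain : t ^ ((1:ℝ)/n) ≤ 4 * M := by
    have h4 : (4:ℝ) ≤ t ^ ((1:ℝ)/n) := by
      have : ((4:ℝ)^n) ^ ((1:ℝ)/n) ≤ t ^ ((1:ℝ)/n) :=
        Real.rpow_le_rpow (by positivity) ht4 (by positivity)
      calc (4:ℝ) = ((4:ℝ)^n) ^ ((1:ℝ)/n) := by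
            rw [← Real.rpow_natCast (4:ℝ) n, ← Real.rpow_mul (by norm_num),
              mul_one_div, div_self hn0, Real.rpow_one]
        _ ≤ t ^ ((1:ℝ)/n) := this
    have hhalf : t ^ ((1:ℝ)/n) / 2 ≤ (N:ℝ) ^ ((1:ℝ)/n) := by
      have ht2' : t / 2 ≤ (N:ℝ) := by linarith
      have h1 : (t/2) ^ ((1:ℝ)/n) ≤ (N:ℝ) ^ ((1:ℝ)/n) :=
        Real.rpow_le_rpow (by positivity) ht2' (by positivity)
      have h2 : t ^ ((1:ℝ)/n) / 2 ≤ (t/2) ^ ((1:ℝ)/n) := by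
        rw [Real.div_rpow ht0.le (by norm_num : (0:ℝ) ≤ 2)]
        have h21 : (2:ℝ) ^ ((1:ℝ)/n) ≤ 2 := by
          calc (2:ℝ) ^ ((1:ℝ)/n) ≤ (2:ℝ) ^ (1:ℝ) :=
                Real.rpow_le_rpow_of_exponent_le (by norm_num)
                  (by rw [div_le_one (by positivity)]; exact_mod_cast hn)
            _ = 2 := Real.rpow_one 2
        gcongr
      exact h2.trans h1
    have hMb : (N:ℝ) ^ ((1:ℝ)/n) - 1 < M := Nat.sub_one_lt_floor _
    nlinarith
  calc t ^ ((1:ℝ)/n) * psiFun n α t ≤ t ^ ((1:ℝ)/n) * (1/M) :=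
        mul_le_mul_of_nonneg_left hpsi htp0
    _ ≤ 4 := by rw [mul_one_div, div_le_iff₀ hM0]; linarith

section cover1d
open MeasureTheory

/-- union of 3 intervals catching all points of [0,1] within nint-distance R of c -/
def coverSet (c R : ℝ) : Set ℝ :=
  ⋃ i ∈ Finset.range 3, Set.Icc (c - ((⌈c - 1 - R⌉ : ℤ) + i) - R) (c - ((⌈c - 1 - R⌉ : ℤ) + i) + R)

lemma mem_coverSet {c R y : ℝ} (hR : 0 ≤ R) (hR1 : R < 1) (hy : y ∈ Set.Icc (0:ℝ) 1)
    (hnear : nint (c - y) ≤ R) : y ∈ coverSet c R := by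
  set a : ℤ := round (c - y) with ha
  have habs : |c - y - a| ≤ R := by rw [← nint_eq]; exact hnear
  set a₀ : ℤ := ⌈c - 1 - R⌉ with ha0
  have hage : a₀ ≤ a := by
    apply Int.ceil_le.mpr
    have := (abs_le.mp habs).2
    have hy1 := hy.2
    push_cast
    linarith
  have halt : a < a₀ + 3 := by
    have h1 : (a:ℝ) ≤ c - y + R := by have := (abs_le.mp habs).1; linarith
    have h2 : c - 1 - R ≤ (a₀:ℝ) := Int.le_ceil _
    have hy0 := hy.1
    have : (a:ℝ) < (a₀:ℝ) + 3 := by linarith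
    exact_mod_cast this
  apply Set.mem_biUnion (show (a - a₀).toNat ∈ Finset.range 3 by
    simp only [Finset.mem_range]; omega)
  · have hcast : ((a₀:ℝ) + ((a - a₀).toNat : ℕ)) = (a:ℝ) := by
      have h1 : ((a - a₀).toNat : ℤ) = a - a₀ := by omega
      calc (a₀:ℝ) + (((a - a₀).toNat : ℕ) : ℝ) = ((a₀ + ((a - a₀).toNat : ℤ) : ℤ) : ℝ) := by
            push_cast; ring
        _ = (a:ℝ) := by rw [h1]; push_cast; ring
    constructor
    · rw [hcast]
      have := (abs_le.mp habs).2
      linarith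
    · rw [hcast]
      have := (abs_le.mp habs).1
      linarith

lemma coverSet_measurable (c R : ℝ) : MeasurableSet (coverSet c R) := by
  apply Finset.measurableSet_biUnion
  intro i _
  exact measurableSet_Icc

lemma coverSet_volume {c R : ℝ} (hR : 0 ≤ R) :
    volume (coverSet c R) ≤ ENNReal.ofReal (6 * R) := by
  refine (measure_biUnion_finset_le _ _).trans ?_
  have hIcc : ∀ i : ℕ, volume (Set.Icc (c - ((⌈c - 1 - R⌉ : ℤ) + i) - R)
      (c - ((⌈c - 1 - R⌉ : ℤ) + i) + R)) = ENNReal.ofReal (2 * R) := by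
    intro i
    rw [Real.volume_Icc]
    congr 1
    ring
  rw [Finset.sum_congr rfl fun i _ => hIcc i]
  rw [Finset.sum_const, Finset.card_range, nsmul_eq_mul]
  rw [← ENNReal.ofReal_natCast 3, ← ENNReal.ofReal_mul (by norm_num)]
  apply ENNReal.ofReal_le_ofReal
  push_cast
  linarith

end cover1d

set_option maxHeartbeats 1000000

/-- **Khintchine's criterion (converse direction).** If there exist `δ > 0` and
infinitely many positive integers `q` such that for every `η ∈ ℝ^n` there is a positive
integer `k ≤ q` with `max_j ‖kα_j - η_j‖ ≤ δ / q^(1/n)`, then `α` is non-singular,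
i.e. `limsup_{t→∞} t^(1/n) ψ_α(t) > 0`. -/
theorem well_distributed_implies_nonsingular
    (n : ℕ) (hn : 1 ≤ n) (α : Fin n → ℝ)
    (h : ∃ δ : ℝ, 0 < δ ∧ ∀ Q : ℕ, ∃ q : ℕ, Q ≤ q ∧ 1 ≤ q ∧
      ∀ η : Fin n → ℝ, ∃ k : ℕ, 1 ≤ k ∧ k ≤ q ∧
        (⨆ j, nint ((k : ℝ) * α j - η j)) ≤ δ / (q : ℝ) ^ ((1 : ℝ) / n)) :
    0 < Filter.atTop.limsup (fun t : ℝ => t ^ ((1 : ℝ) / n) * psiFun n α t) := by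
  classical
  obtain ⟨δ, hδ, hq⟩ := h
  have hn0 : (n:ℝ) ≠ 0 := by positivity
  have hNE : Nonempty (Fin n) := ⟨⟨0, hn⟩⟩
  set D : ℝ := (12*δ)^n with hD
  have hD0 : 0 < D := by positivity
  set m : ℕ := ⌈4*D⌉₊ with hm
  have hmD : 4*D ≤ (m:ℝ) := Nat.le_ceil _
  have hm0 : (0:ℝ) < m := by linarith
  have hm1 : 1 ≤ m := Nat.one_le_ceil_iff.mpr (by positivity)
  set lam : ℝ := (4*D)⁻¹ with hlam
  have hlam0 : 0 < lam := by positivity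
  set ε : ℝ := δ * lam ^ ((1:ℝ)/n) / m with hε
  have hε0 : 0 < ε := by positivity
  have hbdd : Filter.IsBoundedUnder (· ≤ ·) (Filter.atTop : Filter ℝ)
      (fun t : ℝ => t ^ ((1:ℝ)/n) * psiFun n α t) :=
    ⟨4, Filter.eventually_map.mpr (psi_bounded n hn α)⟩
  refine lt_of_lt_of_le hε0 (Filter.le_limsup_of_frequently_le ?_ hbdd)
  by_contra hcon
  have hev : ∀ᶠ t in (Filter.atTop : Filter ℝ), t ^ ((1:ℝ)/n) * psiFun n α t < ε := by
    filter_upwards [Filter.not_frequently.mp hcon] with t ht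
    exact lt_of_not_ge ht
  obtain ⟨T₀, hT₀⟩ := Filter.eventually_atTop.mp hev
  obtain ⟨Q, hQ⟩ := exists_nat_ge (max ((max T₀ 1 + 1)/lam) ((2*δ)^n + 1))
  obtain ⟨q, hqQ, hq1, hdense⟩ := hq Q
  have hqR : (Q:ℝ) ≤ q := Nat.cast_le.mpr hqQ
  have hq0 : (0:ℝ) < q := by exact_mod_cast hq1
  have hqmax : max ((max T₀ 1 + 1)/lam) ((2*δ)^n + 1) ≤ (q:ℝ) := le_trans hQ hqR
  set T : ℝ := lam * q with hT
  have hT1 : max T₀ 1 ≤ T := by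
    have h1 : (max T₀ 1 + 1)/lam ≤ (q:ℝ) := le_trans (le_max_left _ _) hqmax
    rw [div_le_iff₀ hlam0] at h1
    nlinarith
  have htT : T₀ ≤ T := le_trans (le_max_left _ _) hT1
  have htone : 1 ≤ T := le_trans (le_max_right _ _) hT1
  have hT0 : 0 < T := by linarith
  have hqpow : (0:ℝ) < (q:ℝ) ^ ((1:ℝ)/n) := Real.rpow_pos_of_pos hq0 _
  set r : ℝ := δ / (q:ℝ) ^ ((1:ℝ)/n) with hrdef
  have hr0 : 0 < r := by positivity
  have hqpow_n : ((q:ℝ) ^ ((1:ℝ)/n))^n = (q:ℝ) := by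
    rw [← Real.rpow_natCast ((q:ℝ) ^ ((1:ℝ)/n)) n, ← Real.rpow_mul hq0.le,
      one_div, inv_mul_cancel₀ hn0, Real.rpow_one]
  have hr1 : 2*r < 1 := by
    have h2d : ((2*δ):ℝ)^n < (q:ℝ) :=
      lt_of_lt_of_le (lt_add_one _) (le_trans (le_max_right _ _) hqmax)
    have h3 : (((2*δ):ℝ)^n) ^ ((1:ℝ)/n) < (q:ℝ) ^ ((1:ℝ)/n) :=
      Real.rpow_lt_rpow (by positivity) h2d (by positivity)
    have he : (((2*δ):ℝ)^n) ^ ((1:ℝ)/n) = 2*δ := by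
      rw [← Real.rpow_natCast (2*δ) n, ← Real.rpow_mul (by positivity),
        mul_one_div, div_self hn0, Real.rpow_one]
    rw [he] at h3
    rw [hrdef]
    rw [show 2*(δ / (q:ℝ) ^ ((1:ℝ)/n)) = (2*δ) / (q:ℝ) ^ ((1:ℝ)/n) by ring,
      div_lt_one hqpow]
    exact h3
  -- singularity at T
  have hft : T ^ ((1:ℝ)/n) * psiFun n α T < ε := hT₀ T htT
  have htpow0 : 0 < T ^ ((1:ℝ)/n) := Real.rpow_pos_of_pos hT0 _
  have hpsi : psiFun n α T < ε / T ^ ((1:ℝ)/n) := by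
    rw [lt_div_iff₀ htpow0]; nlinarith
  obtain ⟨p, hp1, hpT, hw⟩ := psi_lt α htone hpsi
  have hp0 : (0:ℝ) < p := by exact_mod_cast hp1
  -- per-coordinate bound : m * nint(p α j) < r
  have hTpow : T ^ ((1:ℝ)/n) = lam ^ ((1:ℝ)/n) * (q:ℝ) ^ ((1:ℝ)/n) := by
    rw [hT, Real.mul_rpow hlam0.le hq0.le]
  have hlampow : (0:ℝ) < lam ^ ((1:ℝ)/n) := Real.rpow_pos_of_pos hlam0 _
  have hepsT : ε / T ^ ((1:ℝ)/n) = r / m := by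
    rw [hε, hTpow, hrdef]
    field_simp
  have hwj : ∀ j, (m:ℝ) * nint ((p:ℝ) * α j) < r := by
    intro j
    have h1 : nint ((p:ℝ) * α j) < ε / T ^ ((1:ℝ)/n) :=
      lt_of_le_of_lt (nint_le_sup (fun j => (p:ℝ) * α j) j) hw
    rw [hepsT, lt_div_iff₀ hm0] at h1
    nlinarith
  -- covering claim
  have hcover : ∀ η : Fin n → ℝ, ∃ t' : ℕ, t' < q/(m*p)+1 ∧ ∃ b : ℕ, b < p ∧
      ∀ j, nint (((t'*(m*p) + b : ℕ):ℝ) * α j - η j) ≤ 2*r := by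
    intro η
    obtain ⟨k, hk1, hkq, hkd⟩ := hdense η
    refine ⟨(k/p)/m, ?_, k % p, Nat.mod_lt _ (by omega), ?_⟩
    · have h1 : (k/p)/m = k/(p*m) := Nat.div_div_eq_div_mul k p m
      have h2 : k/(p*m) ≤ q/(p*m) := Nat.div_le_div_right hkq
      rw [h1, mul_comm p m] at *
      omega
    · set t' : ℕ := (k/p)/m with ht'
      set s : ℕ := (k/p) % m with hs'
      set b : ℕ := k % p with hb'
      have hs : s < m := Nat.mod_lt _ (by omega)
      have hkdec : k = t'*(m*p) + b + s*p := by
        have e1 : p * (k / p) + k % p = k := Nat.div_add_mod k p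
        have e2 : m * ((k/p)/m) + (k/p) % m = k / p := Nat.div_add_mod (k/p) m
        calc k = p * (k/p) + b := by rw [e1]
          _ = p * (m * t' + s) + b := by rw [e2]
          _ = t'*(m*p) + b + s*p := by ring
      intro j
      have hkcast : ((t'*(m*p) + b : ℕ):ℝ) * α j - η j
          = (-( ((s*p : ℕ):ℝ) * α j)) + ((k:ℝ) * α j - η j) := by
        rw [hkdec]; push_cast; ring
      calc nint (((t'*(m*p) + b : ℕ):ℝ) * α j - η j)
          ≤ nint (-( ((s*p : ℕ):ℝ) * α j)) + nint ((k:ℝ) * α j - η j) := by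
            rw [hkcast]; exact nint_add_le _ _
        _ ≤ (s:ℝ) * nint ((p:ℝ) * α j) + r := by
            have h1 : nint (-( ((s*p : ℕ):ℝ) * α j)) = nint (((s*p : ℕ):ℝ) * α j) :=
              nint_neg _
            have h2 : nint (((s*p : ℕ):ℝ) * α j) ≤ (s:ℝ) * nint ((p:ℝ) * α j) := by
              have := nint_int_mul_le s ((p:ℝ) * α j)
              refine le_trans (le_of_eq ?_) this
              congr 1
              push_cast
              ring
            have h3 : nint ((k:ℝ) * α j - η j) ≤ r :=
              le_trans (nint_le_sup (fun j => (k:ℝ) * α j - η j) j) hkd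
            linarith
        _ ≤ 2*r := by
            have h4 : (s:ℝ) * nint ((p:ℝ) * α j) ≤ (m:ℝ) * nint ((p:ℝ) * α j) := by
              apply mul_le_mul_of_nonneg_right _ (nint_nonneg _)
              exact_mod_cast hs.le
            have := hwj j
            linarith
  -- measure-theoretic counting
  set Ncard : ℕ := (q/(m*p)+1)*p with hNc
  have hmeas : (1:ENNReal) ≤ (Ncard : ENNReal) * ENNReal.ofReal (12*r) ^ n := by
    have hBox : MeasureTheory.volume (Set.pi Set.univ fun _ : Fin n => Set.Icc (0:ℝ) 1)
        = 1 := by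
      rw [MeasureTheory.volume_pi_pi]
      simp [Real.volume_Icc]
    set S : Finset (ℕ × ℕ) := Finset.range (q/(m*p)+1) ×ˢ Finset.range p with hS
    set U : ℕ × ℕ → Set (Fin n → ℝ) := fun z =>
      Set.pi Set.univ (fun j => coverSet (((z.1*(m*p) + z.2 : ℕ):ℝ) * α j) (2*r)) with hU
    have hsub : (Set.pi Set.univ fun _ : Fin n => Set.Icc (0:ℝ) 1) ⊆ ⋃ z ∈ S, U z := by
      intro η hη
      obtain ⟨t', ht', b, hb, hj⟩ := hcover η
      refine Set.mem_biUnion (show (t', b) ∈ S by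
        simp only [hS, Finset.mem_product, Finset.mem_range]; exact ⟨ht', hb⟩) ?_
      intro j _
      refine mem_coverSet (by linarith) hr1 (hη j (Set.mem_univ j)) ?_
      have := hj j
      rw [show ((t'*(m*p) + b : ℕ):ℝ) * α j - η j
        = ((t'*(m*p) + b : ℕ):ℝ) * α j - η j from rfl] at this
      exact this
    have hvolU : ∀ z ∈ S, MeasureTheory.volume (U z) ≤ ENNReal.ofReal (12*r) ^ n := by
      intro z _
      rw [hU, MeasureTheory.volume_pi_pi]
      calc ∏ j : Fin n, MeasureTheory.volume (coverSet (((z.1*(m*p) + z.2 : ℕ):ℝ) * α j) (2*r))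
          ≤ ∏ _j : Fin n, ENNReal.ofReal (12*r) := by
            apply Finset.prod_le_prod'
            intro j _
            refine (coverSet_volume (by linarith)).trans (le_of_eq ?_)
            congr 1
            ring
        _ = ENNReal.ofReal (12*r) ^ n := by
            rw [Finset.prod_const, Finset.card_univ, Fintype.card_fin]
    calc (1:ENNReal) = MeasureTheory.volume
          (Set.pi Set.univ fun _ : Fin n => Set.Icc (0:ℝ) 1) := hBox.symm
      _ ≤ MeasureTheory.volume (⋃ z ∈ S, U z) := MeasureTheory.measure_mono hsub
      _ ≤ ∑ z ∈ S, MeasureTheory.volume (U z) := MeasureTheory.measure_biUnion_finset_le S U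
      _ ≤ ∑ _z ∈ S, ENNReal.ofReal (12*r) ^ n := Finset.sum_le_sum hvolU
      _ = (S.card : ENNReal) * ENNReal.ofReal (12*r) ^ n := by
          rw [Finset.sum_const, nsmul_eq_mul]
      _ = (Ncard : ENNReal) * ENNReal.ofReal (12*r) ^ n := by
          rw [hS, Finset.card_product, Finset.card_range, Finset.card_range, hNc]
  -- to reals
  have hreal : (1:ℝ) ≤ (Ncard:ℝ) * (12*r)^n := by
    rw [← ENNReal.ofReal_natCast, ← ENNReal.ofReal_pow (by linarith),
      ← ENNReal.ofReal_mul (by positivity)] at hmeas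
    exact ENNReal.one_le_ofReal.mp hmeas
  -- endgame arithmetic
  have hrn : ((12*r):ℝ)^n = D / q := by
    rw [hrdef, show 12*(δ / (q:ℝ) ^ ((1:ℝ)/n)) = (12*δ)/((q:ℝ) ^ ((1:ℝ)/n)) by ring,
      div_pow, hqpow_n, hD]
  have hNle : (Ncard:ℝ) ≤ (q:ℝ)/m + (p:ℝ) := by
    rw [hNc]
    push_cast
    have h1 : ((q/(m*p) : ℕ):ℝ) ≤ (q:ℝ)/((m:ℝ)*(p:ℝ)) := by
      have h0 := Nat.cast_div_le (α := ℝ) (m := q) (n := m*p)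
      rw [Nat.cast_mul] at h0
      exact h0
    have h2 : (((q/(m*p) : ℕ):ℝ) + 1) * (p:ℝ) ≤ ((q:ℝ)/((m:ℝ)*(p:ℝ)) + 1)*(p:ℝ) := by
      apply mul_le_mul_of_nonneg_right _ hp0.le
      linarith
    have h3 : ((q:ℝ)/((m:ℝ)*(p:ℝ)) + 1)*(p:ℝ) = (q:ℝ)/m + (p:ℝ) := by
      field_simp
    linarith
  have hple : (p:ℝ) ≤ lam * q := hpT
  have hqm : (q:ℝ)/m ≤ lam * q := by
    rw [div_le_iff₀ hm0]
    have : lam * (4*D) = 1 := by rw [hlam]; field_simp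
    nlinarith
  have hN2 : (Ncard:ℝ) ≤ 2 * lam * q := by linarith
  have hfinal : (Ncard:ℝ) * ((12*r)^n) ≤ 1/2 := by
    rw [hrn]
    have h1 : (Ncard:ℝ) * (D/q) ≤ (2*lam*q) * (D/q) := by
      apply mul_le_mul_of_nonneg_right hN2 (by positivity)
    have h2 : (2*lam*q) * (D/q) = 1/2 := by
      rw [hlam]
      field_simp
      ring
    linarith
  linarith
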